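/- Given any tree T on kn vertices, there exists at most one set F of k-1 edges of T such that removing F from T creates k connected components, each with exactly n vertices. -/

import Mathlib

open SimpleGraph


private lemma supp_dichotomy {V : Type*} {H H' : SimpleGraph V} (hle : H ≤ H')
    (c : H.ConnectedComponent) (d : H'.ConnectedComponent) :
    c.supp ⊆ d.supp ∨ Disjoint c.supp d.supp := by
  by_cases h : ∃ x ∈ c.supp, x ∈ d.supp
  · obtain ⟨x, hxc, hxd⟩ := h
    left
    have h2 := ConnectedComponent.connectedComponentMk_supp_subset_supp hle d hxd
    rwa [(ConnectedComponent.mem_supp_iff _ _).mp hxc] at h2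
  · right
    rw [Set.disjoint_left]
    intro a ha had
    exact h ⟨a, ha, had⟩

private lemma aux_dvd {V : Type*} [Fintype V] (H : SimpleGraph V) (n : ℕ)
    (hn : ∀ c : H.ConnectedComponent, c.supp.ncard = n)
    (S : Set V)
    (hS : ∀ c : H.ConnectedComponent, c.supp ⊆ S ∨ Disjoint c.supp S) :
    n ∣ S.ncard := by
  classical
  have : Fintype H.ConnectedComponent := Fintype.ofFinite _
  have hSeq : S.toFinset =
      (Finset.univ.filter (fun c : H.ConnectedComponent => c.supp ⊆ S)).biUnion
        (fun c => c.supp.toFinset) := by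
    ext x
    simp only [Set.mem_toFinset, Finset.mem_biUnion, Finset.mem_filter, Finset.mem_univ,
      true_and]
    constructor
    · intro hx
      refine ⟨H.connectedComponentMk x, ?_, rfl⟩
      rcases hS (H.connectedComponentMk x) with h | h
      · exact h
      · exact absurd hx (Set.disjoint_left.mp h rfl)
    · rintro ⟨c, hc, hxc⟩
      exact hc hxc
  have hcard : S.ncard = S.toFinset.card := Set.ncard_eq_toFinset_card' S
  rw [hcard, hSeq, Finset.card_biUnion]
  · have : ∀ c ∈ Finset.univ.filter (fun c : H.ConnectedComponent => c.supp ⊆ S),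
        c.supp.toFinset.card = n := by
      intro c _
      rw [← Set.ncard_eq_toFinset_card']
      exact hn c
    rw [Finset.sum_congr rfl this, Finset.sum_const, smul_eq_mul]
    exact dvd_mul_left n _
  · intro c _ d _ hcd
    unfold Function.onFun
    rw [Finset.disjoint_left]
    intro a hac had
    rw [Set.mem_toFinset, ConnectedComponent.mem_supp_iff] at hac had
    exact hcd (hac ▸ had ▸ rfl)

private lemma comp_side {V : Type*} (T : SimpleGraph V) (F : Set (Sym2 V)) (u v : V)
    (d : (T.deleteEdges F).ConnectedComponent)
    (hd : d ≠ (T.deleteEdges F).connectedComponentMk u) :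
    d.supp ⊆ ((T.deleteEdges {s(u,v)}).connectedComponentMk u).supp ∨
      Disjoint d.supp ((T.deleteEdges {s(u,v)}).connectedComponentMk u).supp := by
  classical
  -- any two vertices of d are reachable in T.deleteEdges {s(u,v)}
  have key : ∀ x y : V, x ∈ d.supp → y ∈ d.supp →
      (T.deleteEdges {s(u,v)}).Reachable x y := by
    intro x y hx hy
    rw [ConnectedComponent.mem_supp_iff] at hx hy
    have hr : (T.deleteEdges F).Reachable x y := ConnectedComponent.exact (hx.trans hy.symm)
    obtain ⟨p⟩ := hr
    have hep : s(u,v) ∉ p.edges := by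
      intro hmem
      have hu : u ∈ p.support := p.fst_mem_support_of_mem_edges hmem
      have hxu : (T.deleteEdges F).Reachable x u := ⟨p.takeUntil u hu⟩
      exact hd (hx.symm.trans (ConnectedComponent.sound hxu))
    have hle : (T.deleteEdges F).deleteEdges {s(u,v)} ≤ T.deleteEdges {s(u,v)} := by
      intro a b hab
      rw [deleteEdges_adj] at hab ⊢
      exact ⟨T.deleteEdges_le _ hab.1, hab.2⟩
    have q := p.toDeleteEdges {s(u,v)} (fun e' he' => by
      simp only [Set.mem_singleton_iff]
      rintro rfl
      exact hep he')
    exact (Reachable.mono hle ⟨q⟩)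
  by_cases h : ∃ x ∈ d.supp, x ∈ ((T.deleteEdges {s(u,v)}).connectedComponentMk u).supp
  · obtain ⟨x, hxd, hxS⟩ := h
    left
    intro y hy
    rw [ConnectedComponent.mem_supp_iff] at hxS ⊢
    have : (T.deleteEdges {s(u,v)}).Reachable y x := key y x hy hxd
    rw [← hxS]
    exact ConnectedComponent.sound this
  · right
    rw [Set.disjoint_left]
    intro a ha had
    exact h ⟨a, ha, had⟩

private lemma aux_subset {V : Type*} [Fintype V] (n : ℕ) (T : SimpleGraph V)
    (hT : T.IsAcyclic) (F₁ F₂ : Finset (Sym2 V)) (hF₁e : ↑F₁ ⊆ T.edgeSet)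
    (hF₁n : ∀ c : (T.deleteEdges ↑F₁).ConnectedComponent, c.supp.ncard = n)
    (hF₂n : ∀ c : (T.deleteEdges ↑F₂).ConnectedComponent, c.supp.ncard = n) :
    F₁ ⊆ F₂ := by
  classical
  intro e he
  induction e using Sym2.ind with
  | _ u v =>
  by_contra hne
  have heE : s(u,v) ∈ T.edgeSet := hF₁e he
  have huv : T.Adj u v := heE
  -- bridge
  have hb : ¬(T \ fromEdgeSet {s(u,v)}).Reachable u v :=
    ((isAcyclic_iff_forall_edge_isBridge.mp hT) heE)
  set Tuv := T.deleteEdges {s(u,v)} with hTuv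
  have hbridge : ¬Tuv.Reachable u v := hb
  set S := (Tuv.connectedComponentMk u).supp with hS
  have huS : u ∈ S := rfl
  have hvS : v ∉ S := by
    intro hv
    rw [hS, ConnectedComponent.mem_supp_iff, ConnectedComponent.eq] at hv
    exact hbridge hv.symm
  set H₂ := T.deleteEdges (↑F₂ : Set (Sym2 V)) with hH₂
  set C := H₂.connectedComponentMk u with hC
  have huvH₂ : H₂.Adj u v := by
    rw [hH₂, deleteEdges_adj]
    exact ⟨huv, by simpa using hne⟩
  have hvC : v ∈ C.supp := ConnectedComponent.sound ⟨huvH₂.symm.toWalk⟩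
  -- n divides |S|
  have hd1 : n ∣ S.ncard := by
    refine aux_dvd (T.deleteEdges (↑F₁ : Set (Sym2 V))) n hF₁n S (fun c => ?_)
    have hle : T.deleteEdges (↑F₁ : Set (Sym2 V)) ≤ Tuv := by
      intro a b hab
      rw [deleteEdges_adj] at hab ⊢
      refine ⟨hab.1, ?_⟩
      simp only [Set.mem_singleton_iff]
      intro hh
      exact hab.2 (by rw [hh]; exact Finset.mem_coe.mpr he)
    exact supp_dichotomy hle c _
  -- n divides |S \ C.supp|
  have hd2 : n ∣ (S \ C.supp).ncard := by
    refine aux_dvd H₂ n hF₂n _ (fun d => ?_)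
    by_cases hdC : d = C
    · right
      subst hdC
      exact Set.disjoint_sdiff_right
    · rcases comp_side T (↑F₂) u v d hdC with h | h
      · left
        intro a ha
        refine ⟨h ha, fun haC => ?_⟩
        rw [ConnectedComponent.mem_supp_iff] at ha haC
        exact hdC (ha ▸ haC ▸ rfl)
      · right
        exact h.mono_right Set.diff_subset
  -- arithmetic
  have hsplit : (S ∩ C.supp).ncard + (S \ C.supp).ncard = S.ncard :=
    Set.ncard_inter_add_ncard_diff_eq_ncard S C.supp (Set.toFinite S)
  have hd3 : n ∣ (S ∩ C.supp).ncard := by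
    have : n ∣ (S ∩ C.supp).ncard + (S \ C.supp).ncard := hsplit ▸ hd1
    exact (Nat.dvd_add_iff_left hd2).mpr this
  have hm0 : 0 < (S ∩ C.supp).ncard := by
    refine Set.ncard_pos (Set.toFinite _) |>.mpr ⟨u, huS, rfl⟩
  have hmn : (S ∩ C.supp).ncard < n := by
    have hss : S ∩ C.supp ⊂ C.supp := by
      refine ⟨Set.inter_subset_right, fun hsub => hvS (hsub hvC).1⟩
    have := Set.ncard_lt_ncard hss (Set.toFinite _)
    rwa [hF₂n C] at this
  have := Nat.le_of_dvd hm0 hd3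
  omega

/-- Given any tree `T` on `k*n` vertices, there is at most one set `F` of
`k-1` edges of `T` whose removal creates `k` connected components, each with exactly
`n` vertices. -/
theorem unique_splitting_set {V : Type*} [Fintype V] (k n : ℕ) (hk : 0 < k) (hn : 0 < n)
    (T : SimpleGraph V) (hT : T.IsTree) (hV : Fintype.card V = k * n)
    (F₁ F₂ : Finset (Sym2 V))
    (hF₁e : ↑F₁ ⊆ T.edgeSet) (hF₁c : F₁.card = k - 1)
    (hF₁k : Nat.card (T.deleteEdges ↑F₁).ConnectedComponent = k)
    (hF₁n : ∀ c : (T.deleteEdges ↑F₁).ConnectedComponent, c.supp.ncard = n)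
    (hF₂e : ↑F₂ ⊆ T.edgeSet) (hF₂c : F₂.card = k - 1)
    (hF₂k : Nat.card (T.deleteEdges ↑F₂).ConnectedComponent = k)
    (hF₂n : ∀ c : (T.deleteEdges ↑F₂).ConnectedComponent, c.supp.ncard = n) :
    F₁ = F₂ := by
  have hA : T.IsAcyclic := hT.IsAcyclic
  exact Finset.Subset.antisymm
    (aux_subset n T hA F₁ F₂ hF₁e hF₁n hF₂n)
    (aux_subset n T hA F₂ F₁ hF₂e hF₂n hF₁n)
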